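/- Let i : ℝ → ℝ be twice continuously differentiable with d := inf_A i''(A) > -∞ and d < 0. If 0 < T < -1/d, then for every b ∈ ℝ the equation i'(A) = (b - A)/T has exactly one real solution A_b, and A_b is the unique critical point and a global minimum of E_b(A) = (b-A)^2/(2T) + i(A); in particular E_b''(A_b) = i''(A_b) + 1/T > 0. -/

import Mathlib

/-- Short-time Gibbsianness: if `i` is C² with `d := inf i'' > -∞`, `d < 0`, and
`0 < T < -1/d`, then for every `b` the equation `i'(A) = (b-A)/T` has exactly one real
solution `A_b`; `A_b` is the unique critical point and a global minimum of
`E_b(A) = (b-A)²/(2T) + i(A)`, and `E_b''(A_b) = i''(A_b) + 1/T > 0`. -/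
theorem stmt6 (i : ℝ → ℝ) (hi : ContDiff ℝ 2 i)
    (d : ℝ) (hd : IsGLB (Set.range (deriv (deriv i))) d) (hd0 : d < 0)
    (T : ℝ) (hT : 0 < T) (hTd : T < -1 / d) :
    ∀ b : ℝ,
      (∃! A : ℝ, deriv i A = (b - A) / T) ∧
      (∀ A : ℝ, deriv i A = (b - A) / T →
        (∀ B : ℝ, (b - A) ^ 2 / (2 * T) + i A ≤ (b - B) ^ 2 / (2 * T) + i B) ∧
        (∀ B : ℝ, deriv (fun C : ℝ => (b - C) ^ 2 / (2 * T) + i C) B = 0 → B = A) ∧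
        0 < deriv (deriv i) A + 1 / T) := by
  have hT' : T ≠ 0 := ne_of_gt hT
  have hdi : Differentiable ℝ i := hi.differentiable (by norm_num)
  have hC : ContDiff ℝ 1 (deriv i) := by
    have h : ContDiff ℝ (1 + 1) i := by norm_num; exact hi
    exact (contDiff_succ_iff_deriv.mp h).2.2
  have hdi' : Differentiable ℝ (deriv i) := hC.differentiable (by norm_num)
  -- c := d + 1/T > 0
  have h1 : d * (-1 / d) = -1 := by field_simp [ne_of_lt hd0]
  have hTd2 : T * (-d) < 1 := by nlinarith
  have hc : 0 < d + 1 / T := by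
    have : -d < 1 / T := (lt_div_iff₀ hT).mpr (by linarith)
    linarith
  have hlb : ∀ x, d ≤ deriv (deriv i) x := fun x => hd.1 ⟨x, rfl⟩
  intro b
  set g : ℝ → ℝ := fun A => deriv i A + A / T - b / T with hg_def
  have hgdiff : Differentiable ℝ g := by
    exact ((hdi'.add ((differentiable_id).div_const T)).sub_const _)
  have hgderiv : ∀ x, deriv g x = deriv (deriv i) x + 1 / T := by
    intro x
    have h : HasDerivAt g (deriv (deriv i) x + 1 / T) x := by
      have := ((hdi' x).hasDerivAt.add ((hasDerivAt_id x).div_const T)).sub_const (b / T)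
      exact this.congr_deriv (by ring)
    exact h.deriv
  have hgpos : ∀ x, 0 < deriv g x := by
    intro x; rw [hgderiv x]; have := hlb x; linarith
  have hgmono : StrictMono g := strictMono_of_deriv_pos hgpos
  -- existence of root of g
  have hgcont : Continuous g := hgdiff.continuous
  have key : ∀ x y : ℝ, x ≤ y → (d + 1 / T) * (y - x) ≤ g y - g x := by
    intro x y hxy
    exact Convex.mul_sub_le_image_sub_of_le_deriv convex_univ hgcont.continuousOn
      (hgdiff.differentiableOn) (fun z _ => by rw [hgderiv z]; have := hlb z; linarith)
      x trivial y trivial hxy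
  obtain ⟨A, hA⟩ : ∃ A, g A = 0 := by
    set c := d + 1 / T with hcdef
    set y := max 0 ((1 - g 0) / c) with hy
    set x := min 0 ((-1 - g 0) / c) with hx
    have hy0 : 0 ≤ y := le_max_left _ _
    have hx0 : x ≤ 0 := min_le_left _ _
    have hgy : 1 ≤ g y := by
      have h1 : (1 - g 0) / c ≤ y := le_max_right _ _
      have h2 : 1 - g 0 ≤ y * c := (div_le_iff₀ hc).mp h1
      have h3 := key 0 y hy0
      nlinarith
    have hgx : g x ≤ -1 := by
      have h1 : x ≤ (-1 - g 0) / c := min_le_right _ _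
      have h2 : x * c ≤ -1 - g 0 := (le_div_iff₀ hc).mp h1
      have h3 := key x 0 hx0
      nlinarith
    have hxy : x ≤ y := le_trans hx0 hy0
    have := intermediate_value_Icc hxy hgcont.continuousOn
      (show (0:ℝ) ∈ Set.Icc (g x) (g y) from ⟨by linarith, by linarith⟩)
    obtain ⟨A, _, hA⟩ := this
    exact ⟨A, hA⟩
  -- equivalence of equation and g = 0
  have heq : ∀ A : ℝ, deriv i A = (b - A) / T ↔ g A = 0 := by
    intro A
    constructor
    · intro h; simp only [hg_def, h]; field_simp; ring
    · intro h
      have : deriv i A = b / T - A / T := by simp only [hg_def] at h; linarith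
      rw [this]; field_simp
  -- derivative of E
  have hE : ∀ B : ℝ, HasDerivAt (fun C : ℝ => (b - C) ^ 2 / (2 * T) + i C) (g B) B := by
    intro B
    have h1 : HasDerivAt (fun C : ℝ => (b - C) ^ 2 / (2 * T) + i C)
        (((2 : ℕ) * (b - B) ^ (2 - 1) * (-1)) / (2 * T) + deriv i B) B := by
      exact ((((hasDerivAt_id B).const_sub b).pow 2).div_const (2 * T)).add (hdi B).hasDerivAt
    convert h1 using 1
    simp only [hg_def]
    field_simp
    ring
  -- monotonicity of E around a root
  have main : ∀ A : ℝ, g A = 0 →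
      (∀ B : ℝ, (b - A) ^ 2 / (2 * T) + i A ≤ (b - B) ^ 2 / (2 * T) + i B) ∧
      (∀ B : ℝ, deriv (fun C : ℝ => (b - C) ^ 2 / (2 * T) + i C) B = 0 → B = A) ∧
      0 < deriv (deriv i) A + 1 / T := by
    intro A hA0
    set E : ℝ → ℝ := fun C => (b - C) ^ 2 / (2 * T) + i C with hEdef
    have hEcont : Continuous E := by
      exact (((continuous_const.sub continuous_id).pow 2).div_const _).add hdi.continuous
    have hEderiv : ∀ B, deriv E B = g B := fun B => (hE B).deriv
    have hmono : StrictMonoOn E (Set.Ici A) := by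
      apply strictMonoOn_of_deriv_pos (convex_Ici A) hEcont.continuousOn
      intro x hx
      rw [interior_Ici] at hx
      rw [hEderiv x]
      calc (0:ℝ) = g A := hA0.symm
        _ < g x := hgmono hx
    have hanti : StrictAntiOn E (Set.Iic A) := by
      apply strictAntiOn_of_deriv_neg (convex_Iic A) hEcont.continuousOn
      intro x hx
      rw [interior_Iic] at hx
      rw [hEderiv x]
      calc g x < g A := hgmono hx
        _ = 0 := hA0
    refine ⟨?_, ?_, ?_⟩
    · intro B
      rcases le_total B A with h | h
      · rcases eq_or_lt_of_le h with h' | h'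
        · rw [h']
        · exact le_of_lt (hanti (le_of_lt h' : B ∈ Set.Iic A) (le_refl A : A ∈ Set.Iic A) h')
      · rcases eq_or_lt_of_le h with h' | h'
        · rw [h']
        · exact le_of_lt (hmono (le_refl A : A ∈ Set.Ici A) (le_of_lt h' : B ∈ Set.Ici A) h')
    · intro B hB
      rw [hEderiv B] at hB
      exact hgmono.injective (hB.trans hA0.symm)
    · have := hlb A; linarith
  refine ⟨⟨A, (heq A).mpr hA, fun B hB => hgmono.injective (((heq B).mp hB).trans hA.symm)⟩, ?_⟩
  intro A' hA'
  exact main A' ((heq A').mp hA')
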